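/- Let M be a Garside monoid with Garside element Δ and simple divisors D, and for g ∈ M let LF(g) denote the left gcd of g and Δ. Then every g ∈ M with g ≠ 1 may be represented uniquely as a product of simple divisors g = μ₁·μ₂⋯μₙ with each μᵢ ∈ D∖{1} and μᵢ = LF(μᵢ·μᵢ₊₁⋯μₙ) for each 1 ≤ i ≤ n (the left greedy normal form of g). -/

import Mathlib

namespace Garside

variable {M : Type*} [Monoid M]

/-- `a` left-divides `b`. -/
def LDvd (a b : M) : Prop := ∃ c, b = a * c

/-- `a` right-divides `b`. -/
def RDvd (a b : M) : Prop := ∃ c, b = c * a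

/-- `m` is indivisible (an atom). -/
def Indec (m : M) : Prop := m ≠ 1 ∧ ∀ a b : M, m = a * b → a = 1 ∨ b = 1

/-- The set of lengths of expressions of `m` as a product of atoms. -/
def exprLengths (m : M) : Set ℕ :=
  {n | ∃ l : List M, (∀ x ∈ l, Indec x) ∧ l.prod = m ∧ l.length = n}

/-- The norm `‖m‖`: supremum of lengths of expressions of `m` as products of atoms. -/
noncomputable def norm (m : M) : ℕ := sSup (exprLengths m)

/-- `M` is a Garside monoid with Garside element `Δ`. -/
structure IsGarside (M : Type*) [Monoid M] (Δ : M) : Prop where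
  /- atomicity: every element is a product of atoms, with bounded expression lengths -/
  expr_nonempty : ∀ m : M, (exprLengths m).Nonempty
  expr_bdd : ∀ m : M, BddAbove (exprLengths m)
  mul_left_cancel : ∀ a b c : M, a * b = a * c → b = c
  mul_right_cancel : ∀ a b c : M, b * a = c * a → b = c
  exists_lgcd : ∀ a b : M, ∃ d, LDvd d a ∧ LDvd d b ∧ ∀ e, LDvd e a → LDvd e b → LDvd e d
  exists_llcm : ∀ a b : M, ∃ l, LDvd a l ∧ LDvd b l ∧ ∀ e, LDvd a e → LDvd b e → LDvd l e
  exists_rgcd : ∀ a b : M, ∃ d, RDvd d a ∧ RDvd d b ∧ ∀ e, RDvd e a → RDvd e b → RDvd e d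
  exists_rlcm : ∀ a b : M, ∃ l, RDvd a l ∧ RDvd b l ∧ ∀ e, RDvd a e → RDvd b e → RDvd l e
  divisor_iff : ∀ x : M, LDvd x Δ ↔ RDvd x Δ
  divisors_finite : {x : M | LDvd x Δ}.Finite
  generates : Submonoid.closure {x : M | LDvd x Δ} = ⊤

/-- The set of simple divisors of the Garside element. -/
def SimpleDivs (Δ : M) : Set M := {x : M | LDvd x Δ}

/-- `G`, with an injective monoid homomorphism `ι : M →* G`, is the group of fractions
of the monoid `M`. -/
structure IsGroupOfFractions (M G : Type*) [Monoid M] [Group G] (ι : M →* G) : Prop where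
  injective : Function.Injective ι
  fraction : ∀ g : G, ∃ a b : M, g = ι a * (ι b)⁻¹

end Garside

namespace Garside

/-- `d` is a left gcd of `a` and `b`. -/
def IsLGcd {M : Type*} [Monoid M] (d a b : M) : Prop :=
  LDvd d a ∧ LDvd d b ∧ ∀ e, LDvd e a → LDvd e b → LDvd e d

end Garside

namespace Garside

variable {M : Type*} [Monoid M] {Δ : M}

lemma norm_mem (hG : IsGarside M Δ) (m : M) : norm m ∈ exprLengths m :=
  Nat.sSup_mem (hG.expr_nonempty m) (hG.expr_bdd m)

lemma le_norm (hG : IsGarside M Δ) {m : M} {n : ℕ} (h : n ∈ exprLengths m) : n ≤ norm m :=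
  le_csSup (hG.expr_bdd m) h

lemma norm_mul_ge (hG : IsGarside M Δ) (a b : M) : norm a + norm b ≤ norm (a * b) := by
  obtain ⟨la, hla, hpa, hna⟩ := norm_mem hG a
  obtain ⟨lb, hlb, hpb, hnb⟩ := norm_mem hG b
  refine le_norm hG ⟨la ++ lb, ?_, ?_, ?_⟩
  · intro x hx
    rcases List.mem_append.mp hx with h | h
    · exact hla x h
    · exact hlb x h
  · simp [hpa, hpb]
  · simp [hna, hnb]

lemma norm_pos (hG : IsGarside M Δ) {m : M} (hm : m ≠ 1) : 1 ≤ norm m := by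
  obtain ⟨n, l, hl, hp, hn⟩ := hG.expr_nonempty m
  match l, hp, hn with
  | [], hp, hn => exact absurd hp.symm hm
  | a :: t, hp, hn =>
    refine le_trans ?_ (le_norm hG ⟨a :: t, hl, hp, rfl⟩)
    simp

lemma mul_eq_one (hG : IsGarside M Δ) {a b : M} (h : a * b = 1) : a = 1 ∧ b = 1 := by
  have ha : a = 1 := by
    by_contra ha
    have h1 : 1 ≤ norm a := norm_pos hG ha
    have hb : (b * a) * b = b := by rw [mul_assoc, h, mul_one]
    have h2 := norm_mul_ge hG (b * a) b
    have h3 := norm_mul_ge hG b a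
    rw [hb] at h2
    omega
  subst ha
  rw [one_mul] at h
  exact ⟨rfl, h⟩

lemma ldvd_antisymm (hG : IsGarside M Δ) {a b : M} (h1 : LDvd a b) (h2 : LDvd b a) :
    a = b := by
  obtain ⟨c, hc⟩ := h1
  obtain ⟨c', hc'⟩ := h2
  have : a * (c * c') = a * 1 := by rw [mul_one, ← mul_assoc, ← hc, ← hc']
  have hcc := hG.mul_left_cancel _ _ _ this
  have := (mul_eq_one hG hcc).1
  subst this
  rw [hc, mul_one]

lemma lgcd_unique (hG : IsGarside M Δ) {d d' a b : M} (h : IsLGcd d a b)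
    (h' : IsLGcd d' a b) : d = d' :=
  ldvd_antisymm hG (h'.2.2 d h.1 h.2.1) (h.2.2 d' h'.1 h'.2.1)

lemma exists_simple_ldvd_aux (hG : IsGarside M Δ) :
    ∀ l : List M, (∀ y ∈ l, LDvd y Δ) → l.prod ≠ 1 →
      ∃ s, LDvd s Δ ∧ s ≠ 1 ∧ LDvd s l.prod := by
  intro l
  induction l with
  | nil => simp
  | cons a t ih =>
    intro hmem hne
    by_cases ha : a = 1
    · subst ha
      rw [List.prod_cons, one_mul] at hne ⊢
      exact ih (fun y hy => hmem y (List.mem_cons_of_mem _ hy)) hne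
    · exact ⟨a, hmem a (List.mem_cons_self), ha, ⟨t.prod, (List.prod_cons).symm⟩⟩

lemma exists_simple_ldvd (hG : IsGarside M Δ) {g : M} (hg : g ≠ 1) :
    ∃ s, LDvd s Δ ∧ s ≠ 1 ∧ LDvd s g := by
  have hmem : g ∈ Submonoid.closure {x : M | LDvd x Δ} := by
    rw [hG.generates]; trivial
  obtain ⟨l, hl, hp⟩ := Submonoid.exists_list_of_mem_closure hmem
  subst hp
  exact exists_simple_ldvd_aux hG l hl hg

/-- The normal form predicate. -/
def NF (Δ : M) (g : M) (l : List M) : Prop :=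
  (∀ μ ∈ l, μ ∈ SimpleDivs Δ ∧ μ ≠ 1) ∧
  l.prod = g ∧
  ∀ i : Fin l.length, IsLGcd (l.get i) ((l.drop i).prod) Δ

lemma nf_tail (hG : IsGarside M Δ) {g μ : M} {t : List M} (h : NF Δ g (μ :: t)) :
    NF Δ t.prod t := by
  obtain ⟨h1, h2, h3⟩ := h
  refine ⟨fun ν hν => h1 ν (List.mem_cons_of_mem _ hν), rfl, ?_⟩
  intro ⟨i, hi⟩
  exact h3 ⟨i + 1, by simpa using hi⟩

lemma nf_exists (hG : IsGarside M Δ) :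
    ∀ n : ℕ, ∀ g : M, norm g ≤ n → g ≠ 1 → ∃ l : List M, NF Δ g l := by
  intro n
  induction n with
  | zero =>
    intro g hn hg
    have := norm_pos hG hg
    omega
  | succ n ih =>
    intro g hn hg
    obtain ⟨d, hd1, hd2, hd3⟩ := hG.exists_lgcd g Δ
    obtain ⟨s, hsΔ, hs1, hsg⟩ := exists_simple_ldvd hG hg
    have hsd : LDvd s d := hd3 s hsg hsΔ
    have hdne : d ≠ 1 := by
      rintro rfl
      obtain ⟨c, hc⟩ := hsd
      exact hs1 (mul_eq_one hG hc.symm).1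
    obtain ⟨g', hg'⟩ := hd1
    by_cases hg'1 : g' = 1
    · subst hg'1
      rw [mul_one] at hg'
      subst hg'
      refine ⟨[g], fun μ hμ => ?_, by simp, ?_⟩
      · rcases List.mem_cons.mp hμ with rfl | h
        · exact ⟨hd2, hdne⟩
        · simp at h
      · intro ⟨i, hi⟩
        match i, hi with
        | 0, _ =>
          show IsLGcd g ([g].prod) Δ
          rw [List.prod_cons, List.prod_nil, mul_one]
          exact ⟨⟨1, (mul_one g).symm⟩, hd2, fun e he _ => he⟩
        | j + 1, hi => exact absurd hi (by simp)
    · have hn' : norm g' ≤ n := by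
        have h1 := norm_mul_ge hG d g'
        have h2 := norm_pos hG hdne
        rw [← hg'] at h1
        omega
      obtain ⟨l', hl'1, hl'2, hl'3⟩ := ih g' hn' hg'1
      refine ⟨d :: l', ?_, ?_, ?_⟩
      · intro μ hμ
        rcases List.mem_cons.mp hμ with rfl | h
        · exact ⟨hd2, hdne⟩
        · exact hl'1 μ h
      · rw [List.prod_cons, hl'2, ← hg']
      · intro ⟨i, hi⟩
        match i, hi with
        | 0, hi =>
          show IsLGcd d ((d :: l').prod) Δ
          rw [List.prod_cons, hl'2, ← hg']
          exact ⟨⟨g', hg'⟩, hd2, hd3⟩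
        | j + 1, hi =>
          show IsLGcd (l'.get ⟨j, by simpa using hi⟩) ((l'.drop j).prod) Δ
          exact hl'3 ⟨j, by simpa using hi⟩

lemma nf_unique (hG : IsGarside M Δ) :
    ∀ l₁ : List M, ∀ g : M, ∀ l₂ : List M, NF Δ g l₁ → NF Δ g l₂ → l₁ = l₂ := by
  intro l₁
  induction l₁ with
  | nil =>
    intro g l₂ h1 h2
    have hg : g = 1 := h1.2.1.symm
    subst hg
    match l₂ with
    | [] => rfl
    | ν :: t₂ =>
      exfalso
      have hν := (h2.1 ν (List.mem_cons_self)).2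
      have : ν * t₂.prod = 1 := by rw [← List.prod_cons]; exact h2.2.1
      exact hν (mul_eq_one hG this).1
  | cons μ t ih =>
    intro g l₂ h1 h2
    match l₂ with
    | [] =>
      exfalso
      have hμ := (h1.1 μ (List.mem_cons_self)).2
      have hg : g = 1 := h2.2.1.symm
      subst hg
      have : μ * t.prod = 1 := by rw [← List.prod_cons]; exact h1.2.1
      exact hμ (mul_eq_one hG this).1
    | ν :: t₂ =>
      have hμg : IsLGcd μ g Δ := by
        have := h1.2.2 ⟨0, by simp⟩
        simpa [h1.2.1] using this
      have hνg : IsLGcd ν g Δ := by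
        have := h2.2.2 ⟨0, by simp⟩
        simpa [h2.2.1] using this
      have hμν : μ = ν := lgcd_unique hG hμg hνg
      subst hμν
      have hprod : μ * t.prod = μ * t₂.prod := by
        rw [← List.prod_cons, ← List.prod_cons, h1.2.1, h2.2.1]
      have ht : t.prod = t₂.prod := hG.mul_left_cancel _ _ _ hprod
      have := ih t.prod t₂ (nf_tail hG h1) (ht ▸ nf_tail hG h2)
      rw [this]

end Garside


open Garside in
/-- every `g ≠ 1` has a unique left greedy normal form: a unique list
`μ₁, …, μₙ` of simple divisors `≠ 1` with product `g` such that each `μᵢ` is the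
left gcd of `Δ` and the remaining suffix product `μᵢ·μᵢ₊₁⋯μₙ`. -/
theorem garside_left_greedy_normal_form
    {M : Type*} [Monoid M] (Δ : M) (hG : IsGarside M Δ)
    (g : M) (hg : g ≠ 1) :
    ∃! l : List M,
      (∀ μ ∈ l, μ ∈ SimpleDivs Δ ∧ μ ≠ 1) ∧
      l.prod = g ∧
      ∀ i : Fin l.length, IsLGcd (l.get i) ((l.drop i).prod) Δ := by
  obtain ⟨l, hl⟩ := nf_exists hG (norm g) g le_rfl hg
  exact ⟨l, hl, fun l' hl' => nf_unique hG l' g l hl' hl⟩
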